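/- arXiv:2102.03492 — 2 statements merged into one kernel-verified Lean document; each statement's English description precedes it below -/
import Mathlib

section
/- Let X and Y be J-posets and let φ: Str X → Str Y be an isomorphism of posets. Then there exists an isomorphism of posets ρ: X → Y such that for every x ∈ X₁, φ({x}, {z ∈ X₂ : z > x}) = ({ρ(x)}, {z ∈ Y₂ : z > ρ(x)}), and for every m ∈ X₂, φ maps (Str X)_{{m}} onto (Str Y)_{{ρ(m)}}. -/
open Order Set

/-- The minimal upper bound set of `A`: the minimal elements of the set of upper bounds. -/
def mub (X : Type*) [PartialOrder X] (A : Set X) : Set X :=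
  {x ∈ upperBounds A | ∀ y ∈ upperBounds A, ¬ y < x}

/-- The set of elements of height `i` in `X`. -/
def level (X : Type*) [PartialOrder X] (i : ℕ) : Set X :=
  {x : X | Order.height x = (i : ℕ∞)}

/-- A J-poset: a countable poset with a unique minimal element satisfying (J1)-(J4). -/
structure IsJPoset (X : Type*) [PartialOrder X] : Prop where
  countable : Countable X
  uniqueMin : ∃! x : X, IsMin x
  dim2 : Order.krullDim X = 2
  mubFinite : ∀ A : Set X, A.Nonempty → (mub X A).Finite
  j2 : ∀ x ∈ level X 1, {z : X | x < z}.Infinite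
  j3 : ∀ m ∈ level X 2, ∀ F : Set X, F ⊆ level X 1 → F.Finite →
        ∃ K : Set X, K ⊆ level X 1 ∧ K.Finite ∧ Disjoint K F ∧ mub X K = {m}
  j4 : ∀ T : Set X, T ⊆ level X 2 → T.Finite → T.Nonempty →
        ∃ t ∈ level X 1, ∀ m ∈ T, t < m

/-- `(A, B)` is a member of `Str X`. -/
def StrMem (X : Type*) [PartialOrder X] (A B : Set X) : Prop :=
  A ⊆ level X 1 ∧ B ⊆ level X 2 ∧
  ((A.Finite ∧ A.Nonempty ∧ B.Finite ∧ B.Nonempty) ∨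
    (∃ x, x ∈ level X 1 ∧ A = {x} ∧ B = {z ∈ level X 2 | x < z})) ∧
  (∃ a ∈ A, ∀ b ∈ B, a < b)

/-- `(C, D)` dominates `(A, B)` via `W`. -/
def Dominates (X : Type*) [PartialOrder X] (C D A B W : Set X) : Prop :=
  A ⊂ C ∧ D ⊆ B ∧ W ⊆ C ∧ W.Nonempty ∧
  (∀ w ∈ W, ∀ d ∈ D, w < d) ∧
  (∀ a ∈ A, ∀ m : X, a < m → (∀ w ∈ W, w < m) → m ∈ D)

/-- The order on `Str X`: `(A,B) ≤ (C,D)`. -/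
def StrLE (X : Type*) [PartialOrder X] (A B C D : Set X) : Prop :=
  (A = C ∧ B = D) ∨ ∃ W : Set X, Dominates X C D A B W

/-- The strict order on `Str X`: `(A,B) < (C,D)`. -/
def StrLT (X : Type*) [PartialOrder X] (A B C D : Set X) : Prop :=
  StrLE X A B C D ∧ ¬(A = C ∧ B = D)

/-- `ℓ(A,B)`: the number of `a ∈ A` with `a < b` for all `b ∈ B`. -/
noncomputable def ell (X : Type*) [PartialOrder X] (A B : Set X) : ℕ :=
  {a ∈ A | ∀ b ∈ B, a < b}.ncard

/-- `η(A,B) = |A| - ℓ(A,B)`. -/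
noncomputable def eta (X : Type*) [PartialOrder X] (A B : Set X) : ℕ :=
  A.ncard - ell X A B

/-- `Str X` as a type of pairs. -/
abbrev Str (X : Type*) [PartialOrder X] := {p : Set X × Set X // StrMem X p.1 p.2}

def strLE {X : Type*} [PartialOrder X] (p q : Str X) : Prop :=
  StrLE X p.1.1 p.1.2 q.1.1 q.1.2

def strLT {X : Type*} [PartialOrder X] (p q : Str X) : Prop :=
  strLE p q ∧ p ≠ q

/-- Membership in `Str_F X`: members of `Str X` with both coordinates finite. -/
def StrFMem (X : Type*) [PartialOrder X] (A B : Set X) : Prop :=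
  StrMem X A B ∧ A.Finite ∧ B.Finite

/-- `Str_F X` as a type of pairs. -/
abbrev StrF (X : Type*) [PartialOrder X] := {p : Set X × Set X // StrFMem X p.1 p.2}

def strFLE {X : Type*} [PartialOrder X] (p q : StrF X) : Prop :=
  StrLE X p.1.1 p.1.2 q.1.1 q.1.2

/-- `K_{Str_F X}(z)`: all `(K, {b}) ∈ Str_F X` with `z ∈ K` and `mub K = {b}`. -/
def KSet (X : Type*) [PartialOrder X] (z : X) : Set (StrF X) :=
  {p | z ∈ p.1.1 ∧ ∃ b : X, p.1.2 = {b} ∧ mub X p.1.1 = {b}}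

/-- The three-element poset `𝕀₂`: two incomparable minimal elements below one top element,
realized as the nonempty subsets of a two-element set ordered by inclusion. -/
abbrev I2 := {s : Set (Fin 2) // s.Nonempty}

namespace JP

variable {X : Type*} [PartialOrder X]

lemma enat_cases2 {a : ℕ∞} (h : a ≤ 2) : a = 0 ∨ a = 1 ∨ a = 2 := by
  lift a to ℕ using ne_top_of_le_ne_top (by decide) h
  have : a ≤ 2 := by exact_mod_cast h
  interval_cases a <;> simp

lemma enat_le_of_lt_succ {a : ℕ∞} {n : ℕ} (h : a < (n : ℕ∞) + 1) : a ≤ (n : ℕ∞) := by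
  lift a to ℕ using ne_top_of_lt h
  have : a < n + 1 := by exact_mod_cast h
  exact_mod_cast Nat.lt_succ_iff.mp this

lemma height_le_two (hX : IsJPoset X) (x : X) : Order.height x ≤ (2 : ℕ∞) := by
  have h := Order.height_le_krullDim x
  rw [hX.dim2, show (2 : WithBot ℕ∞) = ((2:ℕ∞) : WithBot ℕ∞) from rfl] at h
  exact_mod_cast h

lemma height_lt_of_lt (hX : IsJPoset X) {x y : X} (h : x < y) :
    Order.height x < Order.height y :=
  Order.height_strictMono h (lt_of_le_of_lt (height_le_two hX x) (by decide))

lemma mem_level2_of_lt (hX : IsJPoset X) {x z : X} (hx : x ∈ level X 1) (hz : x < z) :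
    z ∈ level X 2 := by
  have h1 : (1 : ℕ∞) < Order.height z := by
    have := height_lt_of_lt hX hz
    rwa [show Order.height x = (1:ℕ∞) by exact_mod_cast hx] at this
  have h2 := height_le_two hX z
  rcases enat_cases2 h2 with h | h | h
  · rw [h] at h1; exact absurd h1 (by decide)
  · rw [h] at h1; exact absurd h1 (by decide)
  · exact h

lemma level_disjoint {i j : ℕ} (hij : i ≠ j) {x : X} (hi : x ∈ level X i) :
    x ∉ level X j := by
  intro hj
  exact hij (by exact_mod_cast hi.symm.trans hj)

noncomputable def root (hX : IsJPoset X) : X := hX.uniqueMin.exists.choose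

lemma root_isMin (hX : IsJPoset X) : IsMin (root hX) := hX.uniqueMin.exists.choose_spec

lemma eq_root (hX : IsJPoset X) {y : X} (h : IsMin y) : y = root hX := by
  obtain ⟨x, hx, hu⟩ := hX.uniqueMin
  rw [hu y h, hu _ (root_isMin hX)]

lemma root_le (hX : IsJPoset X) (y : X) : root hX ≤ y := by
  have aux : ∀ n : ℕ, ∀ y : X, Order.height y ≤ (n : ℕ∞) → root hX ≤ y := by
    intro n
    induction n with
    | zero =>
      intro y hy
      have : IsMin y := Order.height_eq_zero.mp (le_antisymm (by exact_mod_cast hy) bot_le)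
      rw [← eq_root hX this]
    | succ n ih =>
      intro y hy
      by_cases h : IsMin y
      · rw [← eq_root hX h]
      · simp only [IsMin, not_forall] at h
        obtain ⟨b, hb, hnb⟩ := h
        have hblt : b < y := lt_of_le_not_ge hb hnb
        have : Order.height b < Order.height y := height_lt_of_lt hX hblt
        have hb' : Order.height b ≤ (n : ℕ∞) :=
          enat_le_of_lt_succ (lt_of_lt_of_le this (by exact_mod_cast hy))
        exact (ih b hb').trans hblt.le
  exact aux 2 y (height_le_two hX y)

lemma root_height (hX : IsJPoset X) : Order.height (root hX) = 0 :=
  Order.height_eq_zero.mpr (root_isMin hX)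

/-- Key consequence of (J3): all upper bounds of `K` equal `m`. -/
lemma ub_eq_of_mub (hX : IsJPoset X) {K : Set X} {m : X} (hm : m ∈ level X 2)
    (h : mub X K = {m}) : ∀ m' ∈ upperBounds K, m' = m := by
  have hmem : m ∈ mub X K := h ▸ mem_singleton m
  have key : ∀ n : ℕ, ∀ m' ∈ upperBounds K, Order.height m' ≤ (n : ℕ∞) → m ≤ m' := by
    intro n
    induction n with
    | zero =>
      intro m' hm' hh
      by_cases hmin : ∀ y ∈ upperBounds K, ¬ y < m'
      · have : m' ∈ mub X K := ⟨hm', hmin⟩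
        rw [h] at this
        exact le_of_eq this.symm
      · push_neg at hmin
        obtain ⟨y, hy, hlt⟩ := hmin
        have := height_lt_of_lt hX hlt
        rw [show ((0:ℕ):ℕ∞) = 0 from rfl] at hh
        have := lt_of_lt_of_le this hh
        exact absurd this (by simp)
    | succ n ih =>
      intro m' hm' hh
      by_cases hmin : ∀ y ∈ upperBounds K, ¬ y < m'
      · have : m' ∈ mub X K := ⟨hm', hmin⟩
        rw [h] at this
        exact le_of_eq this.symm
      · push_neg at hmin
        obtain ⟨y, hy, hlt⟩ := hmin
        have h1 : Order.height y ≤ (n : ℕ∞) :=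
          enat_le_of_lt_succ (lt_of_lt_of_le (height_lt_of_lt hX hlt) (by exact_mod_cast hh))
        exact (ih y hy h1).trans hlt.le
  intro m' hm'
  have hle : m ≤ m' := key 2 m' hm' (height_le_two hX m')
  rcases eq_or_lt_of_le hle with heq | hlt
  · exact heq.symm
  · have := height_lt_of_lt hX hlt
    rw [hm] at this
    have h2 := height_le_two hX m'
    exact absurd (lt_of_lt_of_le this h2) (by decide)

lemma j3' (hX : IsJPoset X) {m : X} (hm : m ∈ level X 2) {G : Set X}
    (hG : G ⊆ level X 1) (hGf : G.Finite) :
    ∃ K : Set X, K ⊆ level X 1 ∧ K.Finite ∧ K.Nonempty ∧ Disjoint K G ∧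
      (∀ k ∈ K, k < m) ∧ (∀ m' ∈ upperBounds K, m' = m) := by
  obtain ⟨K, hK1, hKf, hKd, hKmub⟩ := hX.j3 m hm G hG hGf
  have hub := ub_eq_of_mub hX hm hKmub
  have hne : K.Nonempty := by
    by_contra h
    rw [not_nonempty_iff_eq_empty] at h
    subst h
    have : root hX ∈ mub X ∅ := by
      constructor
      · intro x hx; exact absurd hx (notMem_empty x)
      · intro y _ hy
        exact absurd ((root_isMin hX) hy.le) (not_le_of_gt hy)
    rw [hKmub] at this
    have := this ▸ root_height hX
    rw [hm] at this
    exact absurd this (by decide)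
  refine ⟨K, hK1, hKf, hne, hKd, ?_, hub⟩
  intro k hk
  have hmub : m ∈ mub X K := hKmub ▸ mem_singleton m
  have hle : k ≤ m := hmub.1 hk
  rcases eq_or_lt_of_le hle with heq | hlt
  · exact absurd (heq ▸ hm) (level_disjoint (by norm_num) (hK1 hk))
  · exact hlt

end JP

namespace JP

variable {X : Type*} [PartialOrder X]

lemma A_sub (p : Str X) : p.1.1 ⊆ level X 1 := p.2.1
lemma B_sub (p : Str X) : p.1.2 ⊆ level X 2 := p.2.2.1
lemma wit (p : Str X) : ∃ a ∈ p.1.1, ∀ b ∈ p.1.2, a < b := p.2.2.2.2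

lemma A_fin (p : Str X) : p.1.1.Finite := by
  rcases p.2.2.2.1 with h | ⟨x, _, hA, _⟩
  · exact h.1
  · rw [hA]; exact finite_singleton x

lemma A_ne (p : Str X) : p.1.1.Nonempty := by
  obtain ⟨a, ha, _⟩ := wit p
  exact ⟨a, ha⟩

lemma B_ne (hX : IsJPoset X) (p : Str X) : p.1.2.Nonempty := by
  rcases p.2.2.2.1 with h | ⟨x, hx, _, hB⟩
  · exact h.2.2.2
  · obtain ⟨z, hz⟩ := (hX.j2 x hx).nonempty
    exact ⟨z, by rw [hB]; exact ⟨mem_level2_of_lt hX hx hz, hz⟩⟩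

lemma str_eq_iff {p q : Str X} : p = q ↔ p.1.1 = q.1.1 ∧ p.1.2 = q.1.2 := by
  constructor
  · rintro rfl; exact ⟨rfl, rfl⟩
  · rintro ⟨h1, h2⟩
    exact Subtype.ext (Prod.ext h1 h2)

lemma strLE_refl (p : Str X) : strLE p p := Or.inl ⟨rfl, rfl⟩

lemma strLT_iff {p q : Str X} :
    strLT p q ↔ ∃ W, Dominates X q.1.1 q.1.2 p.1.1 p.1.2 W := by
  constructor
  · rintro ⟨hle, hne⟩
    rcases hle with ⟨h1, h2⟩ | h
    · exact absurd (str_eq_iff.mpr ⟨h1, h2⟩) hne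
    · exact h
  · rintro ⟨W, hW⟩
    refine ⟨Or.inr ⟨W, hW⟩, ?_⟩
    intro heq
    subst heq
    exact (ssubset_irrefl _) hW.1

lemma strLT_A_ssub {p q : Str X} (h : strLT p q) : p.1.1 ⊂ q.1.1 := by
  obtain ⟨W, hW⟩ := strLT_iff.mp h; exact hW.1

lemma strLE_A_sub {p q : Str X} (h : strLE p q) : p.1.1 ⊆ q.1.1 := by
  rcases h with ⟨h1, _⟩ | ⟨W, hW⟩
  · exact h1 ▸ subset_rfl
  · exact hW.1.1

lemma strLE_B_sub {p q : Str X} (h : strLE p q) : q.1.2 ⊆ p.1.2 := by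
  rcases h with ⟨_, h2⟩ | ⟨W, hW⟩
  · exact h2 ▸ subset_rfl
  · exact hW.2.1

lemma strLT_B_sub {p q : Str X} (h : strLT p q) : q.1.2 ⊆ p.1.2 := strLE_B_sub h.1

lemma strLE_antisymm {p q : Str X} (h1 : strLE p q) (h2 : strLE q p) : p = q := by
  by_contra hne
  have l1 := strLT_A_ssub ⟨h1, hne⟩
  have l2 := strLT_A_ssub ⟨h2, Ne.symm hne⟩
  exact (ssubset_irrefl _) (l1.trans l2)

/-- Construction 1: extend `p` by a set `K` pinned to a single `m ∈ B(p)`. -/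
lemma con1 (hX : IsJPoset X) (p : Str X) {m : X} (hm : m ∈ p.1.2) {G : Set X}
    (hG : G ⊆ level X 1) (hGf : G.Finite) :
    ∃ (q : Str X) (K : Set X), q.1 = (p.1.1 ∪ K, {m}) ∧ K.Nonempty ∧
      Disjoint K (p.1.1 ∪ G) ∧ strLT p q := by
  have hm2 : m ∈ level X 2 := B_sub p hm
  obtain ⟨K, hK1, hKf, hKne, hKd, hKlt, hKub⟩ :=
    j3' hX hm2 (G := p.1.1 ∪ G) (union_subset (A_sub p) hG) ((A_fin p).union hGf)
  obtain ⟨k₀, hk₀⟩ := hKne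
  have hKA : ∀ k ∈ K, k ∉ p.1.1 := fun k hk hkA =>
    (disjoint_left.mp hKd hk) (mem_union_left _ hkA)
  have hq : StrMem X (p.1.1 ∪ K) {m} := by
    refine ⟨union_subset (A_sub p) hK1, singleton_subset_iff.mpr hm2, ?_, ?_⟩
    · exact Or.inl ⟨(A_fin p).union hKf, ⟨k₀, mem_union_right _ hk₀⟩,
        finite_singleton m, ⟨m, rfl⟩⟩
    · exact ⟨k₀, mem_union_right _ hk₀, fun b hb => hb ▸ hKlt k₀ hk₀⟩
  refine ⟨⟨(p.1.1 ∪ K, {m}), hq⟩, K, rfl, ⟨k₀, hk₀⟩, disjoint_union_right.mpr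
    ⟨(disjoint_union_right.mp hKd).1, (disjoint_union_right.mp hKd).2⟩, ?_⟩
  · rw [show Disjoint K (p.1.1 ∪ G) ↔ Disjoint K p.1.1 ∧ Disjoint K G from
      disjoint_union_right] at hKd
    refine strLT_iff.mpr ⟨K, ?_, singleton_subset_iff.mpr hm, subset_union_right,
      ⟨k₀, hk₀⟩, ?_, ?_⟩
    · constructor
      · exact subset_union_left
      · intro hsub
        exact hKA k₀ hk₀ (hsub (mem_union_right _ hk₀))
    · intro w hw d hd
      rw [Set.mem_singleton_iff.mp hd]
      exact hKlt w hw
    · intro a _ m' _ hm'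
      have : m' ∈ upperBounds K := fun k hk => (hm' k hk).le
      exact (hKub m' this) ▸ rfl

/-- Construction 2: merge two elements with the same singleton second coordinate. -/
lemma con2 (hX : IsJPoset X) (q₁ q₂ : Str X) {m : X} (h₁ : q₁.1.2 = {m})
    (h₂ : q₂.1.2 = {m}) : ∃ t : Str X, strLE q₁ t ∧ strLE q₂ t := by
  have hm2 : m ∈ level X 2 := B_sub q₁ (h₁ ▸ mem_singleton m)
  obtain ⟨K, hK1, hKf, hKne, hKd, hKlt, hKub⟩ :=
    j3' hX hm2 (G := q₁.1.1 ∪ q₂.1.1) (union_subset (A_sub q₁) (A_sub q₂))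
      ((A_fin q₁).union (A_fin q₂))
  obtain ⟨k₀, hk₀⟩ := hKne
  set C : Set X := (q₁.1.1 ∪ q₂.1.1) ∪ K with hC
  have ht : StrMem X C {m} := by
    refine ⟨union_subset (union_subset (A_sub q₁) (A_sub q₂)) hK1,
      singleton_subset_iff.mpr hm2, ?_, ?_⟩
    · exact Or.inl ⟨((A_fin q₁).union (A_fin q₂)).union hKf,
        ⟨k₀, mem_union_right _ hk₀⟩, finite_singleton m, ⟨m, rfl⟩⟩
    · exact ⟨k₀, mem_union_right _ hk₀, fun b hb => hb ▸ hKlt k₀ hk₀⟩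
  have dom : ∀ q : Str X, q.1.2 = {m} → q.1.1 ⊆ q₁.1.1 ∪ q₂.1.1 →
      Dominates X C {m} q.1.1 q.1.2 K := by
    intro q hq hsub
    refine ⟨?_, by rw [hq], subset_union_right, ⟨k₀, hk₀⟩, ?_, ?_⟩
    · constructor
      · exact hsub.trans subset_union_left
      · intro hsub'
        exact (disjoint_left.mp hKd hk₀) (hsub (hsub' (mem_union_right _ hk₀)))
    · intro w hw d hd
      rw [Set.mem_singleton_iff.mp hd]
      exact hKlt w hw
    · intro a _ m' _ hm'
      have : m' ∈ upperBounds K := fun k hk => (hm' k hk).le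
      exact (hKub m' this) ▸ rfl
  refine ⟨⟨(C, {m}), ht⟩, Or.inr ⟨K, dom q₁ h₁ subset_union_left⟩,
    Or.inr ⟨K, dom q₂ h₂ subset_union_right⟩⟩

end JP

namespace JP

variable {X : Type*} [PartialOrder X]

/-- The full pair `({x}, {z ∈ X₂ : x < z})`. -/
def fullPair (x : X) (hx : x ∈ level X 1) : Str X :=
  ⟨({x}, {z ∈ level X 2 | x < z}),
    singleton_subset_iff.mpr hx, sep_subset _ _,
    Or.inr ⟨x, hx, rfl, rfl⟩,
    ⟨x, mem_singleton x, fun b hb => hb.2⟩⟩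

lemma fullPair_B_ne (hX : IsJPoset X) {x : X} (hx : x ∈ level X 1) :
    {z ∈ level X 2 | x < z}.Nonempty := by
  obtain ⟨z, hz⟩ := (hX.j2 x hx).nonempty
  exact ⟨z, mem_level2_of_lt hX hx hz, hz⟩

/-- Minimality in `Str X`. -/
def IsMinStr (p : Str X) : Prop := ∀ q, ¬ strLT q p

lemma isMinStr_of_singleton {p : Str X} {x : X} (h : p.1.1 = {x}) : IsMinStr p := by
  intro q hq
  have := strLT_A_ssub hq
  rw [h, ssubset_singleton_iff] at this
  exact (A_ne q).ne_empty this

/-- Order-theoretic "full" predicate. -/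
def IsFullStr (p : Str X) : Prop :=
  IsMinStr p ∧ ∀ q, IsMinStr q → (∀ r, strLT p r → strLT q r) → q = p

/-- If `q < r` and `a` is an ℓ-witness of `q`, then `fullPair a < r`. -/
lemma strLT_fullPair_of_strLT (hX : IsJPoset X) {q r : Str X} (h : strLT q r)
    {a : X} (ha : a ∈ q.1.1) (haw : ∀ b ∈ q.1.2, a < b) :
    strLT (fullPair a (A_sub q ha)) r := by
  obtain ⟨W, h1, h2, h3, h4, h5, h6⟩ := strLT_iff.mp h
  refine strLT_iff.mpr ⟨W, ?_, ?_, h3, h4, h5, ?_⟩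
  · obtain ⟨c, hc, hcq⟩ := exists_of_ssubset h1
    constructor
    · exact singleton_subset_iff.mpr (h1.1 ha)
    · intro hsub
      rcases hsub hc with hc'
      exact hcq (mem_singleton_iff.mp hc' ▸ ha)
  · intro d hd
    exact ⟨B_sub r hd, haw d (h2 hd)⟩
  · intro a' ha' m hm hwm
    rw [mem_singleton_iff.mp ha'] at hm
    exact h6 a ha m hm hwm

/-- Characterization of full elements. -/
lemma full_iff (hX : IsJPoset X) (p : Str X) :
    IsFullStr p ↔ ∃ (x : X) (hx : x ∈ level X 1), p = fullPair x hx := by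
  constructor
  · rintro ⟨hmin, huniq⟩
    obtain ⟨a, ha, haw⟩ := wit p
    refine ⟨a, A_sub p ha, ?_⟩
    refine (huniq (fullPair a (A_sub p ha)) (isMinStr_of_singleton rfl) ?_).symm
    intro r hr
    exact strLT_fullPair_of_strLT hX hr ha haw
  · rintro ⟨x, hx, rfl⟩
    refine ⟨isMinStr_of_singleton rfl, ?_⟩
    intro q hqmin hsub
    have key : ∀ m ∈ ({z ∈ level X 2 | x < z} : Set X), q.1.1 = {x} ∧ m ∈ q.1.2 := by
      intro m hm
      obtain ⟨r, K, hr1, hKne, hKd, hlt⟩ :=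
        con1 hX (fullPair x hx) (m := m) hm (G := q.1.1) (A_sub q) (A_fin q)
      have hq : strLT q r := hsub r hlt
      have hA : q.1.1 ⊂ r.1.1 := strLT_A_ssub hq
      have hB : r.1.2 ⊆ q.1.2 := strLT_B_sub hq
      have hAr : r.1.1 = ({x} : Set X) ∪ K := by rw [hr1]; rfl
      have hBr : r.1.2 = ({m} : Set X) := by rw [hr1]
      constructor
      · have hsub' : q.1.1 ⊆ {x} := by
          intro c hc
          rcases hAr ▸ hA.1 hc with h' | h'
          · exact h'
          · exact absurd hc (fun hcq => disjoint_left.mp hKd h' (mem_union_right _ hcq))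
        have := (A_ne q)
        rcases subset_singleton_iff_eq.mp hsub' with h' | h'
        · exact absurd h' this.ne_empty
        · exact h'
      · exact hB (hBr ▸ mem_singleton m)
    obtain ⟨m₀, hm₀⟩ := fullPair_B_ne hX hx
    have hA : q.1.1 = {x} := (key m₀ hm₀).1
    have hB : q.1.2 = {z ∈ level X 2 | x < z} := by
      apply Subset.antisymm
      · intro b hb
        obtain ⟨a, ha, haw⟩ := wit q
        rw [hA, mem_singleton_iff] at ha
        exact ⟨B_sub q hb, ha ▸ haw b hb⟩
      · intro m hm
        exact (key m hm).2
    exact str_eq_iff.mpr ⟨hA, hB⟩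

/-- Directedness of the strict up-set. -/
def DirUp (p : Str X) : Prop :=
  ∀ r s, strLT p r → strLT p s → ∃ t, strLE r t ∧ strLE s t

lemma singleton_B_of_strLT (hX : IsJPoset X) {p r : Str X} {m : X} (hp : p.1.2 = {m})
    (h : strLT p r) : r.1.2 = {m} := by
  have h1 : r.1.2 ⊆ {m} := hp ▸ strLT_B_sub h
  rcases subset_singleton_iff_eq.mp h1 with h' | h'
  · exact absurd h' (B_ne hX r).ne_empty
  · exact h'

lemma dirUp_iff (hX : IsJPoset X) (p : Str X) :
    DirUp p ↔ ∃ m, p.1.2 = {m} := by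
  constructor
  · intro hdir
    by_contra hB
    push_neg at hB
    obtain ⟨b₀, hb₀⟩ := B_ne hX p
    have : ¬ (p.1.2 ⊆ {b₀}) := by
      intro hsub
      rcases subset_singleton_iff_eq.mp hsub with h' | h'
      · exact (B_ne hX p).ne_empty h'
      · exact hB b₀ h'
    obtain ⟨b₁, hb₁, hb₁'⟩ := not_subset.mp this
    obtain ⟨r, K, hr1, _, _, hltr⟩ :=
      con1 hX p (m := b₀) hb₀ (G := ∅) (empty_subset _) finite_empty
    obtain ⟨s, K', hs1, _, _, hlts⟩ :=
      con1 hX p (m := b₁) hb₁ (G := ∅) (empty_subset _) finite_empty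
    obtain ⟨t, htr, hts⟩ := hdir r s hltr hlts
    have h1 : t.1.2 ⊆ {b₀} := by rw [← show r.1.2 = {b₀} by rw [hr1]]; exact strLE_B_sub htr
    have h2 : t.1.2 ⊆ {b₁} := by rw [← show s.1.2 = {b₁} by rw [hs1]]; exact strLE_B_sub hts
    obtain ⟨c, hc⟩ := B_ne hX t
    have e1 := mem_singleton_iff.mp (h1 hc)
    have e2 := mem_singleton_iff.mp (h2 hc)
    exact hb₁' (mem_singleton_iff.mpr (e2.symm.trans e1))
  · rintro ⟨m, hm⟩ r s hr hs
    exact con2 hX r s (singleton_B_of_strLT hX hm hr) (singleton_B_of_strLT hX hm hs)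

lemma sameSing (hX : IsJPoset X) {p q : Str X} {m m' : X} (hp : p.1.2 = {m})
    (hq : q.1.2 = {m'}) : (∃ t, strLE p t ∧ strLE q t) ↔ m = m' := by
  constructor
  · rintro ⟨t, htp, htq⟩
    obtain ⟨c, hc⟩ := B_ne hX t
    have h1 := (hp ▸ strLE_B_sub htp) hc
    have h2 := (hq ▸ strLE_B_sub htq) hc
    rw [mem_singleton_iff] at h1 h2
    rw [← h1, ← h2]
  · rintro rfl
    exact con2 hX p q hp hq

end JP

namespace JP

variable {X : Type*} {Y : Type*} [PartialOrder X] [PartialOrder Y]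

lemma exists_pair_B (hX : IsJPoset X) {m : X} (hm : m ∈ level X 2) :
    ∃ p : Str X, p.1.2 = {m} := by
  obtain ⟨t, ht1, htm⟩ := hX.j4 {m} (singleton_subset_iff.mpr hm)
    (finite_singleton m) ⟨m, rfl⟩
  exact ⟨⟨({t}, {m}), singleton_subset_iff.mpr ht1, singleton_subset_iff.mpr hm,
    Or.inl ⟨finite_singleton t, ⟨t, rfl⟩, finite_singleton m, ⟨m, rfl⟩⟩,
    ⟨t, mem_singleton t, fun b hb => mem_singleton_iff.mp hb ▸ htm m (mem_singleton m)⟩⟩, rfl⟩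

section Transfer

variable (φ : Str X → Str Y) (ψ : Str Y → Str X)
  (hφψ : ∀ q, φ (ψ q) = q) (hψφ : ∀ p, ψ (φ p) = p)
  (hord : ∀ p q : Str X, strLE p q ↔ strLE (φ p) (φ q))

include hφψ hψφ hord

lemma transfer_LT : ∀ p q : Str X, strLT p q ↔ strLT (φ p) (φ q) := by
  intro p q
  have hinj : φ p = φ q → p = q := fun h => by
    rw [← hψφ p, ← hψφ q, h]
  constructor
  · rintro ⟨hle, hne⟩
    exact ⟨(hord p q).mp hle, fun h => hne (hinj h)⟩
  · rintro ⟨hle, hne⟩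
    exact ⟨(hord p q).mpr hle, fun h => hne (by rw [h])⟩

lemma transfer_min : ∀ p : Str X, IsMinStr p → IsMinStr (φ p) := by
  intro p hp r hr
  have : strLT (ψ r) (ψ (φ p)) := by
    have hordψ : ∀ a b : Str Y, strLT a b ↔ strLT (ψ a) (ψ b) := by
      intro a b
      rw [transfer_LT φ ψ hφψ hψφ hord (ψ a) (ψ b), hφψ, hφψ]
    exact (hordψ r (φ p)).mp hr
  rw [hψφ] at this
  exact hp _ this

lemma transfer_full : ∀ p : Str X, IsFullStr p → IsFullStr (φ p) := by
  intro p hp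
  have hLT := transfer_LT φ ψ hφψ hψφ hord
  have hordψ : ∀ a b : Str Y, strLE a b ↔ strLE (ψ a) (ψ b) := by
    intro a b
    rw [hord (ψ a) (ψ b), hφψ, hφψ]
  have hLTψ : ∀ a b : Str Y, strLT a b ↔ strLT (ψ a) (ψ b) := by
    intro a b
    rw [hLT (ψ a) (ψ b), hφψ, hφψ]
  refine ⟨transfer_min φ ψ hφψ hψφ hord p hp.1, ?_⟩
  intro q hqmin hqsub
  have h1 : IsMinStr (ψ q) := transfer_min ψ φ hψφ hφψ hordψ q hqmin
  have h2 : ∀ r, strLT p r → strLT (ψ q) r := by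
    intro r hr
    have : strLT q (φ r) := hqsub _ ((hLT p r).mp hr)
    have := (hLTψ q (φ r)).mp this
    rwa [hψφ] at this
  have := hp.2 (ψ q) h1 h2
  rw [← hφψ q, this]

lemma transfer_dirUp : ∀ p : Str X, DirUp p → DirUp (φ p) := by
  intro p hp r s hr hs
  have hLT := transfer_LT φ ψ hφψ hψφ hord
  have hordψ : ∀ a b : Str Y, strLE a b ↔ strLE (ψ a) (ψ b) := by
    intro a b
    rw [hord (ψ a) (ψ b), hφψ, hφψ]
  have hLTψ : ∀ a b : Str Y, strLT a b ↔ strLT (ψ a) (ψ b) := by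
    intro a b
    rw [hLT (ψ a) (ψ b), hφψ, hφψ]
  have hr' : strLT p (ψ r) := by
    have := (hLTψ (φ p) r).mp hr
    rwa [hψφ] at this
  have hs' : strLT p (ψ s) := by
    have := (hLTψ (φ p) s).mp hs
    rwa [hψφ] at this
  obtain ⟨t, h1, h2⟩ := hp (ψ r) (ψ s) hr' hs'
  refine ⟨φ t, ?_, ?_⟩
  · have := (hord (ψ r) t).mp h1
    rwa [hφψ] at this
  · have := (hord (ψ s) t).mp h2
    rwa [hφψ] at this

end Transfer

end JP

namespace JP

variable {X : Type*} [PartialOrder X]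

lemma fullPair_eq_iff {a b : X} {ha : a ∈ level X 1} {hb : b ∈ level X 1} :
    fullPair a ha = fullPair b hb ↔ a = b := by
  constructor
  · intro h
    have : ({a} : Set X) = {b} := congrArg (fun p : Str X => p.1.1) h
    exact singleton_eq_singleton_iff.mp this
  · rintro rfl; rfl

lemma tri (hX : IsJPoset X) (x : X) :
    x = root hX ∨ x ∈ level X 1 ∨ x ∈ level X 2 := by
  rcases enat_cases2 (height_le_two hX x) with h | h | h
  · exact Or.inl (eq_root hX (Order.height_eq_zero.mp h))
  · exact Or.inr (Or.inl (by show Order.height x = _; exact_mod_cast h))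
  · exact Or.inr (Or.inr (by show Order.height x = _; exact_mod_cast h))

lemma root_not_level (hX : IsJPoset X) {i : ℕ} (hi : i ≠ 0) : root hX ∉ level X i := by
  intro h
  have : Order.height (root hX) = (i : ℕ∞) := h
  rw [root_height hX] at this
  exact hi (by exact_mod_cast this.symm)

lemma level_ne_root (hX : IsJPoset X) {x : X} {i : ℕ} (hi : i ≠ 0) (h : x ∈ level X i) :
    x ≠ root hX := fun he => root_not_level hX hi (he ▸ h)

end JP

open JP in
theorem stmt_14' {X Y : Type*} [PartialOrder X] [PartialOrder Y]
    (hX : IsJPoset X) (hY : IsJPoset Y)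
    (φ : Str X → Str Y) (hφsurj : Function.Surjective φ)
    (hφord : ∀ p q : Str X, strLE p q ↔ strLE (φ p) (φ q)) :
    ∃ ρ : X → Y, Function.Surjective ρ ∧ (∀ x x' : X, x ≤ x' ↔ ρ x ≤ ρ x') ∧
      (∀ x ∈ level X 1, ∀ p : Str X, p.1 = ({x}, {z ∈ level X 2 | x < z}) →
        (φ p).1 = ({ρ x}, {z ∈ level Y 2 | ρ x < z})) ∧
      (∀ m ∈ level X 2,
        (∀ p : Str X, p.1.2 = {m} → (φ p).1.2 = {ρ m}) ∧
        (∀ q : Str Y, q.1.2 = {ρ m} → ∃ p : Str X, p.1.2 = {m} ∧ φ p = q)) := by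
  classical
  have hinj : Function.Injective φ := by
    intro p q h
    exact strLE_antisymm ((hφord p q).mpr (by rw [h]; exact strLE_refl _))
      ((hφord q p).mpr (by rw [h]; exact strLE_refl _))
  let e : Str X ≃ Str Y := Equiv.ofBijective φ ⟨hinj, hφsurj⟩
  let ψ : Str Y → Str X := e.symm
  have hφψ : ∀ q, φ (ψ q) = q := fun q => e.apply_symm_apply q
  have hψφ : ∀ p, ψ (φ p) = p := fun p => e.symm_apply_apply p
  have hordψ : ∀ a b : Str Y, strLE a b ↔ strLE (ψ a) (ψ b) := by
    intro a b
    conv_lhs => rw [← hφψ a, ← hφψ b]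
    exact (hφord (ψ a) (ψ b)).symm
  have hLT := transfer_LT φ ψ hφψ hψφ hφord
  have hLTψ := transfer_LT ψ φ hψφ hφψ hordψ
  -- construction of ρ₁ (on level 1)
  have h1 : ∀ x : X, ∃ y : Y, ∀ hx : x ∈ level X 1, ∃ hy : y ∈ level Y 1,
      φ (fullPair x hx) = fullPair y hy := by
    intro x
    by_cases hx : x ∈ level X 1
    · have hfull : IsFullStr (fullPair x hx) := (full_iff hX _).mpr ⟨x, hx, rfl⟩
      have := transfer_full φ ψ hφψ hψφ hφord _ hfull
      obtain ⟨y, hy, heq⟩ := (full_iff hY _).mp this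
      exact ⟨y, fun _ => ⟨hy, heq.symm ▸ heq⟩⟩
    · exact ⟨root hY, fun hx' => absurd hx' hx⟩
  choose ρ₁ hρ₁ using h1
  -- construction of ρ₂ (on level 2)
  have h2 : ∀ m : X, ∃ y : Y, ∀ _ : m ∈ level X 2, y ∈ level Y 2 ∧
      ∀ p : Str X, p.1.2 = {m} → (φ p).1.2 = {y} := by
    intro m
    by_cases hm : m ∈ level X 2
    · obtain ⟨q0, hq0⟩ := exists_pair_B hX hm
      have hdirY : DirUp (φ q0) := transfer_dirUp φ ψ hφψ hψφ hφord q0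
        ((dirUp_iff hX q0).mpr ⟨m, hq0⟩)
      obtain ⟨y, hy⟩ := (dirUp_iff hY (φ q0)).mp hdirY
      refine ⟨y, fun _ => ⟨B_sub (φ q0) (hy ▸ mem_singleton y), ?_⟩⟩
      intro p hp
      obtain ⟨t, h1t, h2t⟩ := con2 hX p q0 hp hq0
      have hdirp : DirUp (φ p) := transfer_dirUp φ ψ hφψ hψφ hφord p
        ((dirUp_iff hX p).mpr ⟨m, hp⟩)
      obtain ⟨y', hy'⟩ := (dirUp_iff hY (φ p)).mp hdirp
      have : y' = y := (sameSing hY hy' hy).mp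
        ⟨φ t, (hφord p t).mp h1t, (hφord q0 t).mp h2t⟩
      rw [hy', this]
    · exact ⟨root hY, fun hm' => absurd hm' hm⟩
  choose ρ₂ hρ₂ using h2
  -- injectivity of ρ₁ and ρ₂
  have hρ₁inj : ∀ x x' (hx : x ∈ level X 1) (hx' : x' ∈ level X 1),
      ρ₁ x = ρ₁ x' → x = x' := by
    intro x x' hx hx' h
    obtain ⟨hy, heq⟩ := hρ₁ x hx
    obtain ⟨hy', heq'⟩ := hρ₁ x' hx'
    have h2 : fullPair (ρ₁ x) hy = fullPair (ρ₁ x') hy' := fullPair_eq_iff.mpr h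
    have := hinj (heq.trans (h2.trans heq'.symm))
    exact fullPair_eq_iff.mp this
  have hρ₂inj : ∀ m m' (hm : m ∈ level X 2) (hm' : m' ∈ level X 2),
      ρ₂ m = ρ₂ m' → m = m' := by
    intro m m' hm hm' h
    obtain ⟨p, hp⟩ := exists_pair_B hX hm
    obtain ⟨p', hp'⟩ := exists_pair_B hX hm'
    have e1 : (φ p).1.2 = {ρ₂ m} := (hρ₂ m hm).2 p hp
    have e2 : (φ p').1.2 = {ρ₂ m} := h ▸ (hρ₂ m' hm').2 p' hp'
    obtain ⟨t, h1t, h2t⟩ := con2 hY (φ p) (φ p') e1 e2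
    have w1 : strLE p (ψ t) := by
      have := (hordψ (φ p) t).mp h1t; rwa [hψφ] at this
    have w2 : strLE p' (ψ t) := by
      have := (hordψ (φ p') t).mp h2t; rwa [hψφ] at this
    exact (sameSing hX hp hp').mp ⟨ψ t, w1, w2⟩
  -- surjectivity of ρ₁ and ρ₂
  have hρ₁surj : ∀ y, y ∈ level Y 1 → ∃ x, ∃ _ : x ∈ level X 1, ρ₁ x = y := by
    intro y hy
    have hfullY : IsFullStr (fullPair y hy) := (full_iff hY _).mpr ⟨y, hy, rfl⟩
    have := transfer_full ψ φ hψφ hφψ hordψ _ hfullY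
    obtain ⟨x, hx, hpx⟩ := (full_iff hX _).mp this
    obtain ⟨hy', heq⟩ := hρ₁ x hx
    have : φ (fullPair x hx) = fullPair y hy := by rw [← hpx, hφψ]
    exact ⟨x, hx, fullPair_eq_iff.mp (heq.symm.trans this)⟩
  have hρ₂surj : ∀ y, y ∈ level Y 2 → ∃ m, ∃ _ : m ∈ level X 2, ρ₂ m = y := by
    intro y hy
    obtain ⟨q, hq⟩ := exists_pair_B hY hy
    have hdir : DirUp (ψ q) := transfer_dirUp ψ φ hψφ hφψ hordψ q
      ((dirUp_iff hY q).mpr ⟨y, hq⟩)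
    obtain ⟨m, hmB⟩ := (dirUp_iff hX (ψ q)).mp hdir
    have hm2 : m ∈ level X 2 := B_sub (ψ q) (hmB ▸ mem_singleton m)
    have : (φ (ψ q)).1.2 = {ρ₂ m} := (hρ₂ m hm2).2 (ψ q) hmB
    rw [hφψ, hq] at this
    exact ⟨m, hm2, (singleton_eq_singleton_iff.mp this).symm⟩
  -- incidence
  have hinc : ∀ x m (hx : x ∈ level X 1) (hm : m ∈ level X 2),
      x < m ↔ ρ₁ x < ρ₂ m := by
    intro x m hx hm
    constructor
    · intro hlt
      have hmB : m ∈ (fullPair x hx).1.2 := ⟨hm, hlt⟩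
      obtain ⟨r, K, hr1, _, _, hltr⟩ :=
        con1 hX (fullPair x hx) hmB (G := ∅) (empty_subset _) finite_empty
      have hrB : r.1.2 = {m} := by rw [hr1]
      have e1 : (φ r).1.2 = {ρ₂ m} := (hρ₂ m hm).2 r hrB
      have h2 : strLT (φ (fullPair x hx)) (φ r) := (hLT _ _).mp hltr
      obtain ⟨hy, heq⟩ := hρ₁ x hx
      rw [heq] at h2
      have h3 := strLT_B_sub h2 (e1 ▸ mem_singleton (ρ₂ m))
      exact h3.2
    · intro hlt
      obtain ⟨hy, heq⟩ := hρ₁ x hx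
      have hmB : ρ₂ m ∈ (fullPair (ρ₁ x) hy).1.2 := ⟨(hρ₂ m hm).1, hlt⟩
      obtain ⟨r, K, hr1, _, _, hltr⟩ :=
        con1 hY (fullPair (ρ₁ x) hy) hmB (G := ∅) (empty_subset _) finite_empty
      have hrB : r.1.2 = {ρ₂ m} := by rw [hr1]
      have hlts : strLT (fullPair x hx) (ψ r) := by
        have := (hLTψ (fullPair (ρ₁ x) hy) r).mp hltr
        rwa [← heq, hψφ] at this
      have hdir : DirUp (ψ r) := transfer_dirUp ψ φ hψφ hφψ hordψ r
        ((dirUp_iff hY r).mpr ⟨ρ₂ m, hrB⟩)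
      obtain ⟨m'', hm''B⟩ := (dirUp_iff hX (ψ r)).mp hdir
      have hm''2 : m'' ∈ level X 2 := B_sub (ψ r) (hm''B ▸ mem_singleton m'')
      have e2 : (φ (ψ r)).1.2 = {ρ₂ m''} := (hρ₂ m'' hm''2).2 (ψ r) hm''B
      rw [hφψ, hrB] at e2
      have hmm : m'' = m :=
        hρ₂inj m'' m hm''2 hm ((singleton_eq_singleton_iff.mp e2).symm)
      have h3 := strLT_B_sub hlts (hm''B ▸ mem_singleton m'')
      rw [hmm] at h3
      exact h3.2
  -- define ρ
  let ρ : X → Y := fun x =>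
    if hx : x ∈ level X 1 then ρ₁ x else if hm : x ∈ level X 2 then ρ₂ x else root hY
  have hv1 : ∀ x, x ∈ level X 1 → ρ x = ρ₁ x := fun x hx => dif_pos hx
  have hv2 : ∀ m, m ∈ level X 2 → ρ m = ρ₂ m := by
    intro m hm
    have h1 : m ∉ level X 1 := level_disjoint (by norm_num) hm
    show (if _ : _ then _ else _) = _
    rw [dif_neg h1, dif_pos hm]
  have hvroot : ρ (root hX) = root hY := by
    show (if _ : _ then _ else _) = _
    rw [dif_neg (root_not_level hX (by norm_num)), dif_neg (root_not_level hX (by norm_num))]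
  have hlev1 : ∀ x, x ∈ level X 1 → ρ x ∈ level Y 1 := by
    intro x hx
    obtain ⟨hy, _⟩ := hρ₁ x hx
    rw [hv1 x hx]; exact hy
  have hlev2 : ∀ m, m ∈ level X 2 → ρ m ∈ level Y 2 := by
    intro m hm
    rw [hv2 m hm]; exact (hρ₂ m hm).1
  -- injectivity of ρ
  have hρinj : ∀ x x', ρ x = ρ x' → x = x' := by
    intro x x' h
    rcases tri hX x with h1 | h1 | h1 <;> rcases tri hX x' with h2 | h2 | h2
    · rw [h1, h2]
    · exfalso
      rw [h1, hvroot] at h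
      exact root_not_level hY (i := 1) (by norm_num) (h ▸ hlev1 x' h2)
    · exfalso
      rw [h1, hvroot] at h
      exact root_not_level hY (i := 2) (by norm_num) (h ▸ hlev2 x' h2)
    · exfalso
      rw [h2, hvroot] at h
      exact root_not_level hY (i := 1) (by norm_num) (h ▸ hlev1 x h1)
    · rw [hv1 x h1, hv1 x' h2] at h
      exact hρ₁inj x x' h1 h2 h
    · exfalso
      have := hlev1 x h1
      rw [h] at this
      exact level_disjoint (i := 2) (j := 1) (by norm_num) (hlev2 x' h2) this
    · exfalso
      rw [h2, hvroot] at h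
      exact root_not_level hY (i := 2) (by norm_num) (h ▸ hlev2 x h1)
    · exfalso
      have := hlev2 x h1
      rw [h] at this
      exact level_disjoint (i := 1) (j := 2) (by norm_num) (hlev1 x' h2) this
    · rw [hv2 x h1, hv2 x' h2] at h
      exact hρ₂inj x x' h1 h2 h
  refine ⟨ρ, ?_, ?_, ?_, ?_⟩
  · -- surjectivity
    intro y
    rcases tri hY y with h | h | h
    · exact ⟨root hX, by rw [hvroot, h]⟩
    · obtain ⟨x, hx, hxy⟩ := hρ₁surj y h
      exact ⟨x, by rw [hv1 x hx, hxy]⟩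
    · obtain ⟨m, hm, hmy⟩ := hρ₂surj y h
      exact ⟨m, by rw [hv2 m hm, hmy]⟩
  · -- order embedding
    intro x x'
    constructor
    · intro h
      rcases eq_or_lt_of_le h with rfl | hlt
      · exact le_refl _
      · rcases tri hX x' with h2 | h2 | h2
        · exact absurd (lt_of_lt_of_le hlt (h2 ▸ root_le hX x)) (lt_irrefl x)
        · have hh := height_lt_of_lt hX hlt
          have hx0 : Order.height x = 0 := by
            have h2' : Order.height x' = ((1:ℕ) : ℕ∞) := h2
            rw [h2'] at hh
            have := enat_le_of_lt_succ (n := 0) (by exact_mod_cast hh)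
            exact le_antisymm (by exact_mod_cast this) bot_le
          have hxr : x = root hX := eq_root hX (Order.height_eq_zero.mp hx0)
          rw [hxr, hvroot]
          exact root_le hY _
        · rcases tri hX x with h1 | h1 | h1
          · rw [h1, hvroot]
            exact root_le hY _
          · rw [hv1 x h1, hv2 x' h2]
            exact ((hinc x x' h1 h2).mp hlt).le
          · exfalso
            have hh := height_lt_of_lt hX hlt
            have e1 : Order.height x = ((2:ℕ) : ℕ∞) := h1
            have e2 : Order.height x' = ((2:ℕ) : ℕ∞) := h2
            rw [e1, e2] at hh
            exact lt_irrefl _ hh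
    · intro h
      rcases eq_or_lt_of_le h with heq | hlt
      · exact (hρinj x x' heq).le
      · rcases tri hX x with h1 | h1 | h1
        · rw [h1]
          exact root_le hX x'
        · rcases tri hX x' with h2 | h2 | h2
          · exfalso
            rw [h2, hvroot] at hlt
            exact absurd (lt_of_lt_of_le hlt (root_le hY _)) (lt_irrefl _)
          · exfalso
            have hh := height_lt_of_lt hY hlt
            have e1 : Order.height (ρ x) = ((1:ℕ) : ℕ∞) := hlev1 x h1
            have e2 : Order.height (ρ x') = ((1:ℕ) : ℕ∞) := hlev1 x' h2
            rw [e1, e2] at hh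
            exact lt_irrefl _ hh
          · rw [hv1 x h1, hv2 x' h2] at hlt
            exact ((hinc x x' h1 h2).mpr hlt).le
        · exfalso
          have hh := height_lt_of_lt hY hlt
          have e1 : Order.height (ρ x) = ((2:ℕ) : ℕ∞) := hlev2 x h1
          rw [e1] at hh
          rcases tri hX x' with h2 | h2 | h2
          · rw [h2, hvroot] at hh
            rw [root_height hY] at hh
            exact absurd hh (by decide)
          · have e2 : Order.height (ρ x') = ((1:ℕ) : ℕ∞) := hlev1 x' h2
            rw [e2] at hh
            have : (2:ℕ) < 1 := by exact_mod_cast hh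
            omega
          · have e2 : Order.height (ρ x') = ((2:ℕ) : ℕ∞) := hlev2 x' h2
            rw [e2] at hh
            exact lt_irrefl _ hh
  · -- clause on full pairs
    intro x hx p hp
    have hpe : p = fullPair x hx := Subtype.ext hp
    obtain ⟨hy, heq⟩ := hρ₁ x hx
    rw [hpe, heq, hv1 x hx]
    rfl
  · -- clause on singleton classes
    intro m hm
    constructor
    · intro p hp
      rw [hv2 m hm]
      exact (hρ₂ m hm).2 p hp
    · intro q hq
      rw [hv2 m hm] at hq
      have hdir : DirUp (ψ q) := transfer_dirUp ψ φ hψφ hφψ hordψ q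
        ((dirUp_iff hY q).mpr ⟨ρ₂ m, hq⟩)
      obtain ⟨m'', hm''B⟩ := (dirUp_iff hX (ψ q)).mp hdir
      have hm''2 : m'' ∈ level X 2 := B_sub (ψ q) (hm''B ▸ mem_singleton m'')
      have e2 : (φ (ψ q)).1.2 = {ρ₂ m''} := (hρ₂ m'' hm''2).2 (ψ q) hm''B
      rw [hφψ, hq] at e2
      have hmm : m'' = m := hρ₂inj m'' m hm''2 hm (singleton_eq_singleton_iff.mp e2.symm)
      exact ⟨ψ q, hmm ▸ hm''B, hφψ q⟩

/-- If `φ : Str X → Str Y` is an isomorphism, then there is an isomorphism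
`ρ : X → Y` such that for all `x ∈ X₁`, `φ({x}, {z ∈ X₂ : z > x}) = ({ρ x}, {z ∈ Y₂ : z > ρ x})`,
and for all `m ∈ X₂`, `φ` maps `(Str X)_{{m}}` onto `(Str Y)_{{ρ m}}`. -/
theorem stmt_14 {X Y : Type*} [PartialOrder X] [PartialOrder Y]
    (hX : IsJPoset X) (hY : IsJPoset Y)
    (φ : Str X → Str Y) (hφsurj : Function.Surjective φ)
    (hφord : ∀ p q : Str X, strLE p q ↔ strLE (φ p) (φ q)) :
    ∃ ρ : X → Y, Function.Surjective ρ ∧ (∀ x x' : X, x ≤ x' ↔ ρ x ≤ ρ x') ∧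
      (∀ x ∈ level X 1, ∀ p : Str X, p.1 = ({x}, {z ∈ level X 2 | x < z}) →
        (φ p).1 = ({ρ x}, {z ∈ level Y 2 | ρ x < z})) ∧
      (∀ m ∈ level X 2,
        (∀ p : Str X, p.1.2 = {m} → (φ p).1.2 = {ρ m}) ∧
        (∀ q : Str Y, q.1.2 = {ρ m} → ∃ p : Str X, p.1.2 = {m} ∧ φ p = q)) := by
  exact stmt_14' hX hY φ hφsurj hφord
end

section
/- Let X and Y be J-posets and let φ: Str X → Str Y be an isomorphism of posets. Then there exists a bijection ρ₂: X₂ → Y₂ such that for every (A,B) ∈ Str X, if φ(A,B) = (S,T) then T = ρ₂(B) (the image of B under ρ₂). Moreover, for every finite nonempty B ⊆ X₂, the restriction of φ to (Str X)_B is an isomorphism of posets from (Str X)_B onto (Str Y)_{ρ₂(B)}. -/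
open Order Set

section Aux15

variable {X : Type*} [PartialOrder X]

lemma aux_height_le_two (hX : IsJPoset X) (x : X) : Order.height x ≤ 2 := by
  have h := Order.height_le_krullDim x
  have hd : Order.krullDim X = ((2:ℕ∞) : WithBot ℕ∞) := hX.dim2
  rw [hd] at h
  exact WithBot.coe_le_coe.mp h

lemma aux_lt_level2 (hX : IsJPoset X) {x y : X} (hx : x ∈ level X 1) (hxy : x < y) :
    y ∈ level X 2 := by
  have hx1 : Order.height x = 1 := hx
  have hlt : Order.height x < Order.height y :=
    Order.height_strictMono hxy (by rw [hx1]; exact (lt_top_iff_ne_top.mpr (by simp)))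
  rw [hx1] at hlt
  have h2 : (2:ℕ∞) ≤ Order.height y := by
    have := (ENat.add_one_le_iff (by simp : (1:ℕ∞) ≠ ⊤)).2 hlt
    simpa [one_add_one_eq_two] using this
  exact le_antisymm (aux_height_le_two hX y) h2

lemma aux_level2_not_lt (hX : IsJPoset X) {x y : X} (hx : x ∈ level X 2) (hxy : x < y) :
    False := by
  have hx2 : Order.height x = 2 := hx
  have hlt : Order.height x < Order.height y :=
    Order.height_strictMono hxy (by rw [hx2]; exact (lt_top_iff_ne_top.mpr (by simp)))
  rw [hx2] at hlt
  exact absurd (aux_height_le_two hX y) (not_le_of_gt hlt)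

lemma aux_ne_of_levels {x m : X} (hx : x ∈ level X 1) (hm : m ∈ level X 2) : x ≠ m := by
  intro h
  have h1 : Order.height x = 1 := hx
  have h2 : Order.height x = 2 := h ▸ hm
  rw [h1] at h2
  exact absurd h2 (by decide)

lemma aux_mub_mem {K : Set X} {m : X} (h : mub X K = {m}) :
    m ∈ upperBounds K ∧ ∀ y ∈ upperBounds K, ¬ y < m := by
  have : m ∈ mub X K := by rw [h]; exact rfl
  exact this

lemma aux_mub_K_nonempty (hX : IsJPoset X) {K : Set X} {m : X}
    (hm : m ∈ level X 2) (h : mub X K = {m}) : K.Nonempty := by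
  rcases Set.eq_empty_or_nonempty K with hK0 | hKne
  · exfalso
    have hmin : ¬ IsMin m := by
      intro hmin
      have h0 : Order.height m = 0 := Order.height_eq_zero.mpr hmin
      have h2 : Order.height m = 2 := hm
      rw [h0] at h2
      exact absurd h2 (by decide)
    rw [IsMin] at hmin
    push_neg at hmin
    obtain ⟨b, hb, hnb⟩ := hmin
    have hblt : b < m := lt_of_le_not_ge hb hnb
    have hub : b ∈ upperBounds K := by
      rw [hK0]; intro z hz; exact absurd hz (Set.notMem_empty z)
    exact (aux_mub_mem h).2 b hub hblt
  · exact hKne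

lemma aux_mub_lt {K : Set X} {m : X} (hK : K ⊆ level X 1) (hm : m ∈ level X 2)
    (h : mub X K = {m}) {k : X} (hk : k ∈ K) : k < m :=
  lt_of_le_of_ne ((aux_mub_mem h).1 hk) (aux_ne_of_levels (hK hk) hm)

lemma aux_mub_unique_strict (hX : IsJPoset X) {K : Set X} {m : X}
    (hK : K ⊆ level X 1) (hm : m ∈ level X 2) (h : mub X K = {m})
    {m' : X} (hm' : ∀ k ∈ K, k < m') : m' = m := by
  obtain ⟨k, hk⟩ := aux_mub_K_nonempty hX hm h
  have hub : m' ∈ upperBounds K := fun z hz => (hm' z hz).le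
  have hmem : m' ∈ mub X K := by
    refine ⟨hub, ?_⟩
    intro y hy hylt
    have hky : k ≤ y := hy hk
    rcases eq_or_lt_of_le hky with heq | hlt
    · subst heq
      have hkm : k ∈ mub X K := ⟨hy, fun y' hy' hy'k => absurd (hy' hk) (not_le_of_gt hy'k)⟩
      rw [h] at hkm
      exact aux_ne_of_levels (hK hk) hm hkm
    · exact aux_level2_not_lt hX (aux_lt_level2 hX (hK hk) hlt) hylt
  rw [h] at hmem
  exact hmem

lemma aux_fst_sub (p : Str X) : p.1.1 ⊆ level X 1 := p.2.1

lemma aux_snd_sub (p : Str X) : p.1.2 ⊆ level X 2 := p.2.2.1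

lemma aux_fst_finite (p : Str X) : p.1.1.Finite := by
  rcases p.2.2.2.1 with h | ⟨x, _, hA, _⟩
  · exact h.1
  · rw [hA]; exact Set.finite_singleton x

lemma aux_snd_nonempty (hX : IsJPoset X) (p : Str X) : p.1.2.Nonempty := by
  rcases p.2.2.2.1 with h | ⟨x, hx1, _, hB⟩
  · exact h.2.2.2
  · obtain ⟨z, hz⟩ := (hX.j2 x hx1).nonempty
    exact ⟨z, by rw [hB]; exact ⟨aux_lt_level2 hX hx1 hz, hz⟩⟩

lemma aux_strLE_snd_subset {p r : Str X} (h : strLE p r) : r.1.2 ⊆ p.1.2 := by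
  rcases h with ⟨_, hB⟩ | ⟨W, hd⟩
  · rw [hB]
  · exact hd.2.1

/-- Compatibility: existence of a common upper bound in `Str X`. -/
def Compat {X : Type*} [PartialOrder X] (p q : Str X) : Prop :=
  ∃ r : Str X, strLE p r ∧ strLE q r

lemma aux_ub_extend (hX : IsJPoset X) (p q : Str X) {m : X}
    (hmp : m ∈ p.1.2) (hmq : m ∈ q.1.2) : Compat p q := by
  have hm2 : m ∈ level X 2 := aux_snd_sub p hmp
  obtain ⟨K, hK1, hKfin, hKdisj, hKmub⟩ := hX.j3 m hm2 (p.1.1 ∪ q.1.1)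
    (Set.union_subset (aux_fst_sub p) (aux_fst_sub q))
    ((aux_fst_finite p).union (aux_fst_finite q))
  obtain ⟨k, hk⟩ := aux_mub_K_nonempty hX hm2 hKmub
  have hklt : k < m := aux_mub_lt hK1 hm2 hKmub hk
  set C : Set X := (p.1.1 ∪ q.1.1) ∪ K with hCdef
  have hCsub : C ⊆ level X 1 :=
    Set.union_subset (Set.union_subset (aux_fst_sub p) (aux_fst_sub q)) hK1
  have hkC : k ∈ C := Or.inr hk
  have hCmem : StrMem X C {m} := by
    refine ⟨hCsub, Set.singleton_subset_iff.2 hm2,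
      Or.inl ⟨((aux_fst_finite p).union (aux_fst_finite q)).union hKfin, ⟨k, hkC⟩,
        Set.finite_singleton m, Set.singleton_nonempty m⟩,
      ⟨k, hkC, ?_⟩⟩
    intro b hb
    rw [Set.mem_singleton_iff] at hb
    subst hb
    exact hklt
  refine ⟨⟨(C, {m}), hCmem⟩, ?_, ?_⟩
  · refine Or.inr ⟨K, ⟨le_trans Set.subset_union_left Set.subset_union_left, ?_⟩,
      Set.singleton_subset_iff.2 hmp, Set.subset_union_right, ⟨k, hk⟩, ?_, ?_⟩
    · intro hsub
      exact Set.disjoint_left.mp hKdisj hk (Or.inl (hsub hkC))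
    · intro w hw d hd
      rw [Set.mem_singleton_iff] at hd
      subst hd
      exact aux_mub_lt hK1 hm2 hKmub hw
    · intro a _ m' _ hw
      exact Set.mem_singleton_iff.2 (aux_mub_unique_strict hX hK1 hm2 hKmub hw)
  · refine Or.inr ⟨K, ⟨le_trans Set.subset_union_right Set.subset_union_left, ?_⟩,
      Set.singleton_subset_iff.2 hmq, Set.subset_union_right, ⟨k, hk⟩, ?_, ?_⟩
    · intro hsub
      exact Set.disjoint_left.mp hKdisj hk (Or.inr (hsub hkC))
    · intro w hw d hd
      rw [Set.mem_singleton_iff] at hd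
      subst hd
      exact aux_mub_lt hK1 hm2 hKmub hw
    · intro a _ m' _ hw
      exact Set.mem_singleton_iff.2 (aux_mub_unique_strict hX hK1 hm2 hKmub hw)

lemma aux_compat_iff (hX : IsJPoset X) (p q : Str X) :
    Compat p q ↔ (p.1.2 ∩ q.1.2).Nonempty := by
  constructor
  · rintro ⟨r, h1, h2⟩
    obtain ⟨b, hb⟩ := aux_snd_nonempty hX r
    exact ⟨b, aux_strLE_snd_subset h1 hb, aux_strLE_snd_subset h2 hb⟩
  · rintro ⟨m, h1, h2⟩
    exact aux_ub_extend hX p q h1 h2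

lemma aux_exists_snd_singleton (hX : IsJPoset X) {m : X} (hm : m ∈ level X 2) :
    ∃ p : Str X, p.1.2 = {m} := by
  obtain ⟨K, hK1, hKfin, _, hKmub⟩ := hX.j3 m hm ∅ (Set.empty_subset _) Set.finite_empty
  obtain ⟨k, hk⟩ := aux_mub_K_nonempty hX hm hKmub
  refine ⟨⟨(K, {m}), hK1, Set.singleton_subset_iff.2 hm,
    Or.inl ⟨hKfin, ⟨k, hk⟩, Set.finite_singleton m, Set.singleton_nonempty m⟩,
    ⟨k, hk, ?_⟩⟩, rfl⟩
  intro b hb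
  rw [Set.mem_singleton_iff] at hb
  subst hb
  exact aux_mub_lt hK1 hm hKmub hk

lemma aux_sing_iff (hX : IsJPoset X) (p : Str X) :
    (∀ q r : Str X, Compat p q → Compat p r → Compat q r) ↔ ∃ m, p.1.2 = {m} := by
  constructor
  · intro h
    obtain ⟨m, hm⟩ := aux_snd_nonempty hX p
    refine ⟨m, Set.eq_singleton_iff_unique_mem.2 ⟨hm, ?_⟩⟩
    intro m' hm'
    obtain ⟨q, hq⟩ := aux_exists_snd_singleton hX (aux_snd_sub p hm)
    obtain ⟨r, hr⟩ := aux_exists_snd_singleton hX (aux_snd_sub p hm')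
    have h1 : Compat p q := (aux_compat_iff hX _ _).2 ⟨m, hm, by rw [hq]; exact rfl⟩
    have h2 : Compat p r := (aux_compat_iff hX _ _).2 ⟨m', hm', by rw [hr]; exact rfl⟩
    have h3 := (aux_compat_iff hX _ _).1 (h q r h1 h2)
    rw [hq, hr] at h3
    obtain ⟨z, hz1, hz2⟩ := h3
    rw [Set.mem_singleton_iff] at hz1 hz2
    rw [← hz1, hz2]
  · rintro ⟨m, hm⟩ q r h1 h2
    rw [aux_compat_iff hX, hm] at h1 h2
    obtain ⟨z1, hz1, hzq⟩ := h1
    obtain ⟨z2, hz2, hzr⟩ := h2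
    rw [Set.mem_singleton_iff] at hz1 hz2
    rw [hz1] at hzq
    rw [hz2] at hzr
    exact (aux_compat_iff hX _ _).2 ⟨m, hzq, hzr⟩

lemma aux_level2_nonempty (hX : IsJPoset X) : (level X 2).Nonempty := by
  have hne : Nonempty X := by
    by_contra h
    rw [not_nonempty_iff] at h
    have := hX.dim2
    rw [Order.krullDim_eq_bot_iff.mpr h] at this
    exact absurd this (by simp)
  have h := hX.dim2
  rw [Order.krullDim_eq_iSup_height_of_nonempty] at h
  have h2 : (⨆ a : X, Order.height a) = (2:ℕ∞) := WithBot.coe_inj.mp h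
  by_contra hemp
  rw [Set.not_nonempty_iff_eq_empty, Set.eq_empty_iff_forall_notMem] at hemp
  have hle : (⨆ a : X, Order.height a) ≤ (1:ℕ∞) := by
    refine iSup_le fun a => ?_
    have hlt : Order.height a < 2 :=
      lt_of_le_of_ne (aux_height_le_two hX a) (hemp a)
    have : Order.height a < 1 + 1 := by simpa [one_add_one_eq_two] using hlt
    exact Order.le_of_lt_add_one this
  rw [h2] at hle
  exact absurd hle (by decide)

end Aux15

/-- If `φ : Str X → Str Y` is an isomorphism, then there is a bijection
`ρ₂ : X₂ → Y₂` such that the second coordinate of `φ(A,B)` is `ρ₂(B)` for all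
`(A,B) ∈ Str X`, and for every finite nonempty `B ⊆ X₂`, `φ` restricts to an isomorphism
from `(Str X)_B` onto `(Str Y)_{ρ₂(B)}`. -/
theorem stmt_15 {X Y : Type*} [PartialOrder X] [PartialOrder Y]
    (hX : IsJPoset X) (hY : IsJPoset Y)
    (φ : Str X → Str Y) (hφsurj : Function.Surjective φ)
    (hφord : ∀ p q : Str X, strLE p q ↔ strLE (φ p) (φ q)) :
    ∃ ρ₂ : X → Y,
      Set.MapsTo ρ₂ (level X 2) (level Y 2) ∧
      Set.InjOn ρ₂ (level X 2) ∧
      Set.SurjOn ρ₂ (level X 2) (level Y 2) ∧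
      (∀ p : Str X, (φ p).1.2 = ρ₂ '' p.1.2) ∧
      (∀ B : Set X, B ⊆ level X 2 → B.Finite → B.Nonempty →
        (∀ p : Str X, p.1.2 = B → (φ p).1.2 = ρ₂ '' B) ∧
        (∀ q : Str Y, q.1.2 = ρ₂ '' B → ∃ p : Str X, p.1.2 = B ∧ φ p = q)) := by
  classical
  -- transfer of compatibility through φ
  have htrans : ∀ p q : Str X, Compat p q ↔ Compat (φ p) (φ q) := by
    intro p q
    constructor
    · rintro ⟨r, h1, h2⟩
      exact ⟨φ r, (hφord p r).1 h1, (hφord q r).1 h2⟩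
    · rintro ⟨r', h1, h2⟩
      obtain ⟨r, rfl⟩ := hφsurj r'
      exact ⟨r, (hφord p r).2 h1, (hφord q r).2 h2⟩
  -- transfer of the singleton property
  have hkey0 : ∀ p : Str X, (∃ m, p.1.2 = {m}) ↔ (∃ y, (φ p).1.2 = {y}) := by
    intro p
    rw [← aux_sing_iff hX p, ← aux_sing_iff hY (φ p)]
    constructor
    · intro hp q' r' h1 h2
      obtain ⟨q, rfl⟩ := hφsurj q'
      obtain ⟨r, rfl⟩ := hφsurj r'
      exact (htrans q r).1 (hp q r ((htrans p q).2 h1) ((htrans p r).2 h2))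
    · intro hp q r h1 h2
      exact (htrans q r).2 (hp (φ q) (φ r) ((htrans p q).1 h1) ((htrans p r).1 h2))
  -- choose, for each m ∈ X₂, an element of Str X with second coordinate {m}
  obtain ⟨m0, hm0⟩ := aux_level2_nonempty hX
  obtain ⟨p0, _⟩ := aux_exists_snd_singleton hX hm0
  have hpm' : ∀ m : X, ∃ p : Str X, m ∈ level X 2 → p.1.2 = {m} := by
    intro m
    by_cases h : m ∈ level X 2
    · obtain ⟨p, hp⟩ := aux_exists_snd_singleton hX h
      exact ⟨p, fun _ => hp⟩
    · exact ⟨p0, fun hh => absurd hh h⟩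
  choose pm hpm using hpm'
  -- define ρ
  have hy' : ∀ m : X, ∃ y : Y, m ∈ level X 2 → (φ (pm m)).1.2 = {y} := by
    intro m
    by_cases h : m ∈ level X 2
    · obtain ⟨y, hy⟩ := (hkey0 (pm m)).1 ⟨m, hpm m h⟩
      exact ⟨y, fun _ => hy⟩
    · obtain ⟨y2, _⟩ := aux_level2_nonempty hY
      exact ⟨y2, fun hh => absurd hh h⟩
  choose ρ hρ using hy'
  -- well-definedness: every p with second coordinate {m} maps to second coordinate {ρ m}
  have hwd : ∀ m ∈ level X 2, ∀ p : Str X, p.1.2 = {m} → (φ p).1.2 = {ρ m} := by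
    intro m hm p hp
    obtain ⟨y, hy⟩ := (hkey0 p).1 ⟨m, hp⟩
    have hc : Compat p (pm m) :=
      (aux_compat_iff hX _ _).2 ⟨m, by rw [hp]; exact rfl, by rw [hpm m hm]; exact rfl⟩
    have hint := (aux_compat_iff hY _ _).1 ((htrans p (pm m)).1 hc)
    rw [hy, hρ m hm] at hint
    obtain ⟨z, hz1, hz2⟩ := hint
    rw [Set.mem_singleton_iff] at hz1 hz2
    rw [hy, hz1.symm.trans hz2]
  -- the key membership lemma
  have hmem : ∀ (p : Str X) (m : X), m ∈ level X 2 → (m ∈ p.1.2 ↔ ρ m ∈ (φ p).1.2) := by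
    intro p m hm
    have h1 : Compat p (pm m) ↔ m ∈ p.1.2 := by
      rw [aux_compat_iff hX, hpm m hm]
      constructor
      · rintro ⟨z, hz1, hz2⟩
        rw [Set.mem_singleton_iff] at hz2
        exact hz2 ▸ hz1
      · intro h
        exact ⟨m, h, rfl⟩
    have h2 : Compat (φ p) (φ (pm m)) ↔ ρ m ∈ (φ p).1.2 := by
      rw [aux_compat_iff hY, hρ m hm]
      constructor
      · rintro ⟨z, hz1, hz2⟩
        rw [Set.mem_singleton_iff] at hz2
        exact hz2 ▸ hz1
      · intro h
        exact ⟨ρ m, h, rfl⟩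
    rw [← h1, ← h2]
    exact htrans p (pm m)
  have hmaps : Set.MapsTo ρ (level X 2) (level Y 2) := by
    intro m hm
    have h1 : ρ m ∈ (φ (pm m)).1.2 := by rw [hρ m hm]; exact rfl
    exact aux_snd_sub (φ (pm m)) h1
  have hinj : Set.InjOn ρ (level X 2) := by
    intro m hm m' hm' heq
    have h1 : ρ m ∈ (φ (pm m')).1.2 := by rw [hρ m' hm', heq]; exact rfl
    have h2 := (hmem (pm m') m hm).2 h1
    rw [hpm m' hm'] at h2
    exact h2
  have hsurj : Set.SurjOn ρ (level X 2) (level Y 2) := by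
    intro y hy
    obtain ⟨q, hq⟩ := aux_exists_snd_singleton hY hy
    obtain ⟨p, rfl⟩ := hφsurj q
    obtain ⟨m, hm⟩ := (hkey0 p).2 ⟨y, hq⟩
    have hm2 : m ∈ level X 2 := aux_snd_sub p (by rw [hm]; exact rfl)
    have hval := hwd m hm2 p hm
    rw [hq] at hval
    have : y = ρ m := by
      rw [← Set.mem_singleton_iff, ← hval]
      exact rfl
    exact ⟨m, hm2, this.symm⟩
  have hmain : ∀ p : Str X, (φ p).1.2 = ρ '' p.1.2 := by
    intro p
    ext y
    constructor
    · intro hyp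
      obtain ⟨m, hm2, rfl⟩ := hsurj (aux_snd_sub (φ p) hyp)
      exact ⟨m, (hmem p m hm2).2 hyp, rfl⟩
    · rintro ⟨m, hmp, rfl⟩
      exact (hmem p m (aux_snd_sub p hmp)).1 hmp
  refine ⟨ρ, hmaps, hinj, hsurj, hmain, ?_⟩
  intro B hB _ _
  refine ⟨fun p hp => by rw [hmain p, hp], ?_⟩
  intro q hq
  obtain ⟨p, rfl⟩ := hφsurj q
  refine ⟨p, ?_, rfl⟩
  have h := hmain p
  rw [hq] at h
  exact (hinj.image_eq_image_iff (aux_snd_sub p) hB).1 h.symm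
end
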